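/- Let X be an uncountable set and G a group acting on X; consider the induced action of G by automorphisms on the direct sum H(X) = ⊕_{x∈X} H_x of copies of a nontrivial group H, given by g·(h₁)_{x₁}+⋯+(h_n)_{x_n} = (h₁)_{g·x₁}+⋯+(h_n)_{g·x_n}. If G is a Polish group acting continuously and the action of G on X has all point stabilizers closed, then (H(X), G) is a Polish structure, i.e., the stabilizer in G of every element of H(X) is closed. -/

import Mathlib

/-- If `G` is a Polish group acting on an uncountable set `X` with all point stabilizers
closed, then for the induced action of `G` on the direct sum `H(X) = ⊕_{x ∈ X} H` (by
permuting coordinates), the stabilizer of every element of `H(X)` is closed, i.e.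
`(H(X), G)` is a Polish structure. -/
theorem finsupp_polish_structure {G X H : Type*} [Group G] [TopologicalSpace G]
    [IsTopologicalGroup G] [PolishSpace G] [MulAction G X] [AddGroup H] [Nontrivial H]
    [Uncountable X]
    (hstab : ∀ x : X, IsClosed (MulAction.stabilizer G x : Set G)) :
    ∀ f : X →₀ H, IsClosed {g : G | ∀ x : X, f (g • x) = f x} := by
  intro f
  classical
  -- each "transporter" set {g | g • x = y} is closed (a coset of a stabilizer)
  have hclosed : ∀ x y : X, IsClosed {g : G | g • x = y} := by
    intro x y
    by_cases h : ∃ g₀ : G, g₀ • x = y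
    · obtain ⟨g₀, hg₀⟩ := h
      have hset : {g : G | g • x = y} =
          (fun g => g₀⁻¹ * g) ⁻¹' (MulAction.stabilizer G x : Set G) := by
        ext g
        simp only [Set.mem_setOf_eq, Set.mem_preimage, SetLike.mem_coe,
          MulAction.mem_stabilizer_iff, mul_smul]
        constructor
        · intro hg; rw [hg, ← hg₀, inv_smul_smul]
        · intro hg
          have := congrArg (fun z => g₀ • z) hg
          simpa [smul_smul, hg₀] using this
      rw [hset]
      exact (hstab x).preimage (by continuity)
    · have : {g : G | g • x = y} = ∅ := by
        ext g
        simp only [Set.mem_setOf_eq, Set.mem_empty_iff_false, iff_false]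
        exact fun hg => h ⟨g, hg⟩
      rw [this]; exact isClosed_empty
  have key : {g : G | ∀ x : X, f (g • x) = f x} =
      ⋂ x ∈ f.support, ({g : G | f (g • x) = f x} ∩ {g : G | f (g⁻¹ • x) = f x}) := by
    ext g
    simp only [Set.mem_setOf_eq, Set.mem_iInter, Set.mem_inter_iff, Finsupp.mem_support_iff]
    constructor
    · intro hg x _
      refine ⟨hg x, ?_⟩
      rw [← hg (g⁻¹ • x), smul_inv_smul]
    · intro hg x
      by_cases hx : f x = 0
      · rw [hx]
        by_contra hgx
        have h1 : f (g⁻¹ • (g • x)) = f (g • x) := (hg (g • x) hgx).2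
        rw [inv_smul_smul] at h1
        exact hgx (h1.symm.trans hx)
      · exact (hg x hx).1
  rw [key]
  refine isClosed_biInter fun x hx => IsClosed.inter ?_ ?_
  · have hset : {g : G | f (g • x) = f x} =
        ⋃ y ∈ (f.support.filter (fun y => f y = f x) : Finset X), {g : G | g • x = y} := by
      ext g
      simp only [Set.mem_setOf_eq, Set.mem_iUnion, Finset.mem_filter,
        Finsupp.mem_support_iff, exists_prop]
      constructor
      · intro h
        exact ⟨g • x, ⟨by rw [h]; exact Finsupp.mem_support_iff.mp hx, h⟩, rfl⟩
      · rintro ⟨y, ⟨-, hy⟩, rfl⟩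
        exact hy
    rw [hset]
    exact Set.Finite.isClosed_biUnion (Finset.finite_toSet _) fun y _ => hclosed x y
  · have hset : {g : G | f (g⁻¹ • x) = f x} =
        ⋃ y ∈ (f.support.filter (fun y => f y = f x) : Finset X), {g : G | g • y = x} := by
      ext g
      simp only [Set.mem_setOf_eq, Set.mem_iUnion, Finset.mem_filter,
        Finsupp.mem_support_iff, exists_prop]
      constructor
      · intro h
        refine ⟨g⁻¹ • x, ⟨by rw [h]; exact Finsupp.mem_support_iff.mp hx, h⟩, ?_⟩
        rw [smul_inv_smul]
      · rintro ⟨y, ⟨-, hy⟩, rfl⟩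
        rw [inv_smul_smul]
        exact hy
    rw [hset]
    exact Set.Finite.isClosed_biUnion (Finset.finite_toSet _) fun y _ => hclosed y x
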